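/- Assume ε ∈ {1,−1}, ξ ∉ {0, 1/6}, εξ(1−6ξ) > 0, z is twice differentiable at λ₁* with z′(λ₁*) ≠ 0, and z(λ₁*)² = 1/(6εξ(1−6ξ)). Let J be the 3×3 Jacobian matrix of the vector field F at the point P₁ = (−6ξ·z(λ₁*), 0, λ₁*). Then the characteristic polynomial of J equals (X − 6ξ)²·(X − 12ξ); in particular J has eigenvalues 6ξ, 6ξ, 12ξ, so for ξ > 0 the point P₁ (the finite scale factor singularity) is an unstable node and for ξ < 0 a stable node. -/

import Mathlib

open Polynomial Filter

/-- The factor `D(λ) = 1 − 6εξ(1−6ξ)z(λ)²` coming from the time reparametrization. -/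
noncomputable def Dfun (ε ξ : ℝ) (z : ℝ → ℝ) (l : ℝ) : ℝ :=
  1 - 6*ε*ξ*(1-6*ξ)*(z l)^2

/-- The common bracket
`B(x,y,λ) = −4/3 − 2ξλy²z(λ) + ε(1−6ξ)(1−w_m)x² + 2εξ(1−3w_m)(x+z(λ))² + (1+w_m)(1−y²)`. -/
noncomputable def Bfun (ε ξ wm : ℝ) (z : ℝ → ℝ) (x y l : ℝ) : ℝ :=
  -4/3 - 2*ξ*l*y^2*(z l) + ε*(1-6*ξ)*(1-wm)*x^2
    + 2*ε*ξ*(1-3*wm)*(x + z l)^2 + (1+wm)*(1-y^2)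

/-- First component of the vector field:
`f₁ = −(x − (ε/2)λy²)·D(λ) + (3/2)(x + 6ξz(λ))·B(x,y,λ)`. -/
noncomputable def f1 (ε ξ wm : ℝ) (z : ℝ → ℝ) (x y l : ℝ) : ℝ :=
  -(x - ε/2*l*y^2) * Dfun ε ξ z l + 3/2*(x + 6*ξ*(z l)) * Bfun ε ξ wm z x y l

/-- Second component: `f₂ = y(2 − (1/2)λx)·D(λ) + (3/2)y·B(x,y,λ)`. -/
noncomputable def f2 (ε ξ wm : ℝ) (z : ℝ → ℝ) (x y l : ℝ) : ℝ :=
  y*(2 - 1/2*l*x) * Dfun ε ξ z l + 3/2*y * Bfun ε ξ wm z x y l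

/-- Third component: `f₃ = x·D(λ)/z′(λ)`. -/
noncomputable def f3 (ε ξ : ℝ) (z : ℝ → ℝ) (x y l : ℝ) : ℝ :=
  x * Dfun ε ξ z l / deriv z l

/-- The full vector field `F(x,y,λ) = (f₁,f₂,f₃)` of the reduced cosmological system. -/
noncomputable def Fvec (ε ξ wm : ℝ) (z : ℝ → ℝ) (x y l : ℝ) : ℝ × ℝ × ℝ :=
  (f1 ε ξ wm z x y l, f2 ε ξ wm z x y l, f3 ε ξ z x y l)

/-- The effective equation-of-state parameter `w_eff(x,y,λ)`. -/
noncomputable def weff (ε ξ wm : ℝ) (z : ℝ → ℝ) (x y l : ℝ) : ℝ :=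
  (Dfun ε ξ z l)⁻¹ *
    (-1 + ε*(1-6*ξ)*(1-wm)*x^2 + 2*ε*ξ*(1-3*wm)*(x + z l)^2
      + (1+wm)*(1-y^2) - 2*ε*ξ*(1-6*ξ)*(z l)^2 - 2*ξ*l*y^2*(z l))

/-- The Jacobian matrix `J_{ij} = ∂f_i/∂(j-th variable)` of `F` at the point `(x,y,λ)`. -/
noncomputable def Jmat (ε ξ wm : ℝ) (z : ℝ → ℝ) (x y l : ℝ) :
    Matrix (Fin 3) (Fin 3) ℝ :=
  Matrix.of
    ![![deriv (fun t => f1 ε ξ wm z t y l) x,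
        deriv (fun t => f1 ε ξ wm z x t l) y,
        deriv (fun t => f1 ε ξ wm z x y t) l],
      ![deriv (fun t => f2 ε ξ wm z t y l) x,
        deriv (fun t => f2 ε ξ wm z x t l) y,
        deriv (fun t => f2 ε ξ wm z x y t) l],
      ![deriv (fun t => f3 ε ξ z t y l) x,
        deriv (fun t => f3 ε ξ z x t l) y,
        deriv (fun t => f3 ε ξ z x y t) l]]


private lemma hasDerivAt_cubic (a b c d x : ℝ) :
    HasDerivAt (fun t : ℝ => a*t^3 + b*t^2 + c*t + d) (3*a*x^2 + 2*b*x + c) x := by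
  have h1 : HasDerivAt (fun t : ℝ => t) 1 x := hasDerivAt_id x
  have h3 : HasDerivAt (fun t : ℝ => t^3) (3*x^2) x := by simpa using hasDerivAt_pow 3 x
  have h2 : HasDerivAt (fun t : ℝ => t^2) (2*x) x := by simpa using hasDerivAt_pow 2 x
  have key := (((h3.const_mul a).add (h2.const_mul b)).add (h1.const_mul c)).add_const d
  have hv : 3*a*x^2 + 2*b*x + c = a*(3*x^2) + b*(2*x) + c*1 := by ring
  rw [hv]; exact key

/-- At the finite-scale-factor-singularity point
`P₁ = (−6ξz(λ₁*), 0, λ₁*)` with `z(λ₁*)² = 1/(6εξ(1−6ξ))`, the Jacobian has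
characteristic polynomial `(X − 6ξ)²(X − 12ξ)`: eigenvalues `6ξ, 6ξ, 12ξ`, so for
`ξ > 0` the point is an unstable node (all eigenvalues positive) and for `ξ < 0` a
stable node (all eigenvalues negative). -/
theorem singularity_point_charpoly (ε ξ wm : ℝ) (z : ℝ → ℝ) (lstar : ℝ)
    (hε : ε = 1 ∨ ε = -1) (hξ0 : ξ ≠ 0) (hξ6 : ξ ≠ 1/6)
    (hsign : 0 < ε*ξ*(1-6*ξ))
    (hz1 : ∀ᶠ t in nhds lstar, DifferentiableAt ℝ z t)
    (hz2 : DifferentiableAt ℝ (deriv z) lstar) (hz' : deriv z lstar ≠ 0)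
    (hl : (z lstar)^2 = 1/(6*ε*ξ*(1-6*ξ))) :
    (Jmat ε ξ wm z (-(6*ξ*(z lstar))) 0 lstar).charpoly
      = (X - C (6*ξ))^2 * (X - C (12*ξ)) ∧
    (0 < ξ → ∀ μ ∈ (Jmat ε ξ wm z (-(6*ξ*(z lstar))) 0 lstar).charpoly.roots, 0 < μ) ∧
    (ξ < 0 → ∀ μ ∈ (Jmat ε ξ wm z (-(6*ξ*(z lstar))) 0 lstar).charpoly.roots, μ < 0) := by
  have hεne : ε ≠ 0 := by rcases hε with h|h <;> norm_num [h]
  have he2 : ε^2 = 1 := by rcases hε with h|h <;> norm_num [h]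
  have hprod : ε*ξ*(1-6*ξ) ≠ 0 := ne_of_gt hsign
  have h6 : (6:ℝ)*ε*ξ*(1-6*ξ) ≠ 0 := by
    intro h; apply hprod; nlinarith [h]
  have hkz : 6*ε*ξ*(1-6*ξ)*(z lstar)^2 = 1 := by
    rw [hl]; field_simp
    exact div_self (sub_ne_zero.mpr (by intro h; apply hξ6; linarith))
  have hQ : 6*ξ*(1-6*ξ)*(z lstar)^2 = ε := by
    linear_combination ε*hkz - 6*ξ*(1-6*ξ)*(z lstar)^2 * he2
  have hD : Dfun ε ξ z lstar = 0 := by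
    unfold Dfun; linear_combination -hkz
  have hzd : HasDerivAt z (deriv z lstar) lstar := hz1.self_of_nhds.hasDerivAt
  have hzd2 : HasDerivAt (deriv z) (deriv (deriv z) lstar) lstar := hz2.hasDerivAt
  set G : ℝ := 6*ξ*(1-wm) + (1-3*wm)*(1-6*ξ)/3 with hG
  -- entry (0,0)
  have e00 : deriv (fun t => f1 ε ξ wm z t 0 lstar) (-(6*ξ*(z lstar))) = 6*ξ := by
    have hfe : (fun t => f1 ε ξ wm z t 0 lstar)
        = fun t => (3/2*(ε*(1-6*ξ)*(1-wm) + 2*ε*ξ*(1-3*wm)))*t^3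
          + (3/2*(2*(2*ε*ξ*(1-3*wm))*(z lstar)
              + 6*ξ*(z lstar)*(ε*(1-6*ξ)*(1-wm) + 2*ε*ξ*(1-3*wm))))*t^2
          + (3/2*((wm-1/3) + 2*ε*ξ*(1-3*wm)*(z lstar)^2
              + 2*(2*ε*ξ*(1-3*wm))*(z lstar)*(6*ξ*(z lstar))))*t
          + (3/2*(6*ξ*(z lstar))*((wm-1/3) + 2*ε*ξ*(1-3*wm)*(z lstar)^2)) := by
      funext t
      simp only [f1, Bfun, hD]
      ring
    rw [hfe, (hasDerivAt_cubic _ _ _ _ _).deriv]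
    linear_combination (3/2*ε*G)*hQ + (3/2*G)*he2
  -- entry (0,1)
  have e01 : deriv (fun t => f1 ε ξ wm z (-(6*ξ*(z lstar))) t lstar) 0 = 0 := by
    have hfe : (fun t => f1 ε ξ wm z (-(6*ξ*(z lstar))) t lstar) = fun _ => (0:ℝ) := by
      funext t; simp only [f1, Bfun, hD]; ring
    rw [hfe]; exact deriv_const _ _
  -- entries of the second row
  have e10 : deriv (fun t => f2 ε ξ wm z t 0 lstar) (-(6*ξ*(z lstar))) = 0 := by
    have hfe : (fun t => f2 ε ξ wm z t 0 lstar) = fun _ => (0:ℝ) := by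
      funext t; simp [f2]
    rw [hfe]; exact deriv_const _ _
  have e12 : deriv (fun t => f2 ε ξ wm z (-(6*ξ*(z lstar))) 0 t) lstar = 0 := by
    have hfe : (fun t => f2 ε ξ wm z (-(6*ξ*(z lstar))) 0 t) = fun _ => (0:ℝ) := by
      funext t; simp [f2]
    rw [hfe]; exact deriv_const _ _
  have e11 : deriv (fun t => f2 ε ξ wm z (-(6*ξ*(z lstar))) t lstar) 0 = 6*ξ := by
    have hfe : (fun t => f2 ε ξ wm z (-(6*ξ*(z lstar))) t lstar)
        = fun t => (3/2*(-2*ξ*lstar*(z lstar) - (1+wm)))*t^3 + 0*t^2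
            + (3/2*(wm - 1/3 + ε*(1-6*ξ)*(1-wm)*(6*ξ*(z lstar))^2
                + 2*ε*ξ*(1-3*wm)*(-(6*ξ*(z lstar)) + z lstar)^2))*t + 0 := by
      funext t; simp only [f2, Bfun, hD]; ring
    rw [hfe, (hasDerivAt_cubic _ _ _ _ _).deriv]
    linear_combination (3/2*ε*G)*hQ + (3/2*G)*he2
  -- entries of the third row
  have e20 : deriv (fun t => f3 ε ξ z t 0 lstar) (-(6*ξ*(z lstar))) = 0 := by
    have hfe : (fun t => f3 ε ξ z t 0 lstar) = fun _ => (0:ℝ) := by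
      funext t; simp [f3, hD]
    rw [hfe]; exact deriv_const _ _
  have e21 : deriv (fun t => f3 ε ξ z (-(6*ξ*(z lstar))) t lstar) 0 = 0 := by
    have hfe : (fun t => f3 ε ξ z (-(6*ξ*(z lstar))) t lstar) = fun _ => (0:ℝ) := by
      funext t; simp [f3, hD]
    rw [hfe]; exact deriv_const _ _
  have e22 : deriv (fun t => f3 ε ξ z (-(6*ξ*(z lstar))) 0 t) lstar = 12*ξ := by
    have hDd := ((hzd.pow 2).const_mul (6*ε*ξ*(1-6*ξ))).const_sub 1
    have hg := (hDd.const_mul (-(6*ξ*(z lstar)))).div hzd2 hz'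
    have hfe : (fun t => f3 ε ξ z (-(6*ξ*(z lstar))) 0 t)
        = fun t => -(6*ξ*(z lstar)) * (1 - 6*ε*ξ*(1-6*ξ)*(z t)^2) / deriv z t := by
      funext t; simp only [f3, Dfun]
    have hg' : HasDerivAt (fun t => -(6*ξ*(z lstar)) * (1 - 6*ε*ξ*(1-6*ξ)*(z t)^2) / deriv z t) _ lstar := hg
    rw [hfe, hg'.deriv]
    have hD1 : 1 - 6*ε*ξ*(1-6*ξ)*(z lstar)^2 = 0 := by linear_combination -hkz
    rw [div_eq_iff (pow_ne_zero 2 hz')]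
    norm_num
    linear_combination (12*ξ*(deriv z lstar)^2)*hkz
      + (6*ξ*(z lstar)*deriv (deriv z) lstar)*hD1
  -- assemble the Jacobian
  have hJ : Jmat ε ξ wm z (-(6*ξ*(z lstar))) 0 lstar
      = Matrix.of ![![6*ξ, 0, deriv (fun t => f1 ε ξ wm z (-(6*ξ*(z lstar))) 0 t) lstar],
          ![0, 6*ξ, 0], ![0, 0, 12*ξ]] := by
    unfold Jmat
    rw [e00, e01, e10, e11, e12, e20, e21, e22]
  have hcp : (Jmat ε ξ wm z (-(6*ξ*(z lstar))) 0 lstar).charpoly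
      = (X - C (6*ξ))^2 * (X - C (12*ξ)) := by
    rw [hJ, Matrix.charpoly, Matrix.det_fin_three]
    simp [Matrix.charmatrix_apply_eq, Matrix.charmatrix_apply_ne,
      Matrix.vecHead, Matrix.vecTail, Function.comp]
    left; ring
  refine ⟨hcp, ?_, ?_⟩
  · intro hξ μ hμ
    rw [hcp] at hμ
    have h := (Polynomial.mem_roots'.mp hμ).2
    simp only [Polynomial.IsRoot, Polynomial.eval_mul, Polynomial.eval_pow,
      Polynomial.eval_sub, Polynomial.eval_X, Polynomial.eval_C] at h
    rcases mul_eq_zero.mp h with h' | h'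
    · have := pow_eq_zero_iff (two_ne_zero) |>.mp h'
      have : μ = 6*ξ := by linarith [sub_eq_zero.mp this]
      linarith
    · have : μ = 12*ξ := by linarith [sub_eq_zero.mp h']
      linarith
  · intro hξ μ hμ
    rw [hcp] at hμ
    have h := (Polynomial.mem_roots'.mp hμ).2
    simp only [Polynomial.IsRoot, Polynomial.eval_mul, Polynomial.eval_pow,
      Polynomial.eval_sub, Polynomial.eval_X, Polynomial.eval_C] at h
    rcases mul_eq_zero.mp h with h' | h'
    · have := pow_eq_zero_iff (two_ne_zero) |>.mp h'
      have : μ = 6*ξ := by linarith [sub_eq_zero.mp this]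
      linarith
    · have : μ = 12*ξ := by linarith [sub_eq_zero.mp h']
      linarith
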